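/- Let μ and ν be probability measures on the same measurable space with μ ≪ ν, and suppose D_{α₀}(μ‖ν) < ∞ for some α₀ > 1. Then D(μ‖ν) < ∞, the map α ↦ D_α(μ‖ν) is nondecreasing on (1, α₀], and D_α(μ‖ν) → D(μ‖ν) as α → 1 from above, where D(·‖·) denotes Kullback–Leibler divergence. -/

import Mathlib

open MeasureTheory ProbabilityTheory ENNReal Filter

noncomputable section
open scoped Classical

/-- Kullback–Leibler divergence `D(μ‖ν) = ∫ log (dμ/dν) dμ`, valued in `[0,∞]`
(`∞` when the log-density is not integrable). -/
def KLdiv {Y : Type*} [MeasurableSpace Y] (μ ν : Measure Y) : ℝ≥0∞ :=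
  if Integrable (fun y => Real.log (μ.rnDeriv ν y).toReal) μ then
    ENNReal.ofReal (∫ y, Real.log (μ.rnDeriv ν y).toReal ∂μ)
  else ∞

/-- Rényi divergence `D_α(μ‖ν) = (α-1)⁻¹ log ∫ (dμ/dν)^α dν`, valued in `[0,∞]`,
`∞` when the integral is infinite (α>1) or zero (α<1). -/
def RenyiDiv {Y : Type*} [MeasurableSpace Y] (α : ℝ) (μ ν : Measure Y) : ℝ≥0∞ :=
  if (1 < α ∧ ∫⁻ y, μ.rnDeriv ν y ^ α ∂ν = ∞) ∨ (α < 1 ∧ ∫⁻ y, μ.rnDeriv ν y ^ α ∂ν = 0) then ∞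
  else ENNReal.ofReal ((α - 1)⁻¹ * Real.log (∫⁻ y, μ.rnDeriv ν y ^ α ∂ν).toReal)

/-- Output marginal `Q_{P,W} = ∫ W(x,·) dP(x)`. -/
def outputM {X Y : Type*} [MeasurableSpace X] [MeasurableSpace Y]
    (P : Measure X) (W : Kernel X Y) : Measure Y := P.bind (fun x => W x)

/-- Mutual information `I(P,W) = D(P ⊗ W ‖ P × Q_{P,W})`. -/
def mutInfo {X Y : Type*} [MeasurableSpace X] [MeasurableSpace Y]
    (P : Measure X) (W : Kernel X Y) : ℝ≥0∞ :=
  KLdiv (P.compProd W) (P.prod (outputM P W))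

/-- The defining property of a `(δ,J)`-approximating family `V` of the compound
channel `(W s)_{s ∈ S}` under input distribution `P`. -/
def ApproxFam {X Y S : Type*} [MeasurableSpace X] [MeasurableSpace Y]
    (P : Measure X) (W : S → Kernel X Y) (δ : ℝ) {J : ℕ} (V : Fin J → Kernel X Y) : Prop :=
  (∀ s : S, ∃ j : Fin J,
      (∫⁻ x, KLdiv (W s x) (V j x) ∂P) ≤ ENNReal.ofReal δ ∧
      (∃ α : ℝ, 1 < α ∧ ∀ x : X, RenyiDiv α (W s x) (V j x) < ∞) ∧
      mutInfo P (V j) - mutInfo P (W s) ≤ ENNReal.ofReal δ) ∧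
  (∀ j : Fin J, ∃ s : S, mutInfo P (W s) - mutInfo P (V j) ≤ ENNReal.ofReal δ)

/-- The compound channel `(W s)_{s ∈ S}` can be `(δ,J)`-approximated under `P`. -/
def CanApprox {X Y S : Type*} [MeasurableSpace X] [MeasurableSpace Y]
    (P : Measure X) (W : S → Kernel X Y) (δ : ℝ) (J : ℕ) : Prop :=
  ∃ V : Fin J → Kernel X Y, (∀ j, IsMarkovKernel (V j)) ∧ ApproxFam P W δ V

/-- The `(P,n,R)`-ensemble of random codebooks: `M` codewords drawn i.i.d. from `P^⊗n`. -/
def ensemble {X : Type*} [MeasurableSpace X] (P : Measure X) (n M : ℕ) :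
    Measure (Fin M → Fin n → X) :=
  Measure.pi (fun _ => Measure.pi (fun _ => P))

/-- The cost-constrained codebook: codewords violating `∑ c ≤ n C` are replaced by `(x₀,…,x₀)`. -/
def constrainCB {X : Type*} (c : X → ℝ) (Cmax : ℝ) (x₀ : X) {n M : ℕ}
    (cb : Fin M → Fin n → X) : Fin M → Fin n → X :=
  fun m => if ∑ j, c (cb m j) ≤ n * Cmax then cb m else fun _ => x₀

open scoped Topology

/-- Slope of `t ^ ·` from `1` is monotone (a consequence of Bernoulli's inequality). -/
private lemma aux_bernoulli_slope {t : ℝ} (ht : 0 < t) {s s' : ℝ} (hs : 0 < s) (hss' : s ≤ s') :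
    (t ^ s - 1) / s ≤ (t ^ s' - 1) / s' := by
  have hs' : 0 < s' := hs.trans_le hss'
  have hts : 0 < t ^ s := Real.rpow_pos_of_pos ht _
  have hp : 1 ≤ s' / s := (one_le_div hs).mpr hss'
  have hb := one_add_mul_self_le_rpow_one_add (s := t ^ s - 1) (by linarith) hp
  rw [show (1 : ℝ) + (t ^ s - 1) = t ^ s by ring, ← Real.rpow_mul ht.le,
    show s * (s' / s) = s' by field_simp] at hb
  have h2 : s' / s * (t ^ s - 1) * s ≤ (t ^ s' - 1) * s :=
    mul_le_mul_of_nonneg_right (by linarith) hs.le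
  rw [div_le_div_iff₀ hs hs']
  calc (t ^ s - 1) * s' = s' / s * (t ^ s - 1) * s := by field_simp
    _ ≤ (t ^ s' - 1) * s := h2

private lemma aux_log_le {t : ℝ} (ht : 0 < t) {s : ℝ} (hs : 0 < s) :
    Real.log t ≤ (t ^ s - 1) / s := by
  rw [le_div_iff₀ hs]
  calc Real.log t * s = s * Real.log t := mul_comm _ _
    _ = Real.log (t ^ s) := (Real.log_rpow ht s).symm
    _ ≤ t ^ s - 1 := Real.log_le_sub_one_of_pos (Real.rpow_pos_of_pos ht s)

private lemma aux_lyapunov {Z : Type*} [MeasurableSpace Z] (μ : Measure Z)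
    [IsProbabilityMeasure μ] {h : Z → ℝ≥0∞} (hm : Measurable h) (hfin : ∀ᵐ z ∂μ, h z < ∞)
    {s t : ℝ} (hs : 0 < s) (hst : s ≤ t) :
    (∫⁻ z, h z ^ s ∂μ) ^ s⁻¹ ≤ (∫⁻ z, h z ^ t ∂μ) ^ t⁻¹ := by
  have ht : 0 < t := hs.trans_le hst
  have key := eLpNorm_le_eLpNorm_of_exponent_le (μ := μ) (f := fun z => (h z).toReal)
    (p := ENNReal.ofReal s) (q := ENNReal.ofReal t) (ENNReal.ofReal_le_ofReal hst)
    hm.ennreal_toReal.aestronglyMeasurable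
  rw [eLpNorm_eq_lintegral_rpow_enorm_toReal (by simp [hs]) (by simp),
    eLpNorm_eq_lintegral_rpow_enorm_toReal (by simp [ht]) (by simp),
    ENNReal.toReal_ofReal hs.le, ENNReal.toReal_ofReal ht.le] at key
  have hcong : ∀ u : ℝ, ∫⁻ z, ‖(h z).toReal‖ₑ ^ u ∂μ = ∫⁻ z, h z ^ u ∂μ := by
    intro u
    refine lintegral_congr_ae ?_
    filter_upwards [hfin] with z hz
    rw [Real.enorm_eq_ofReal ENNReal.toReal_nonneg, ENNReal.ofReal_toReal hz.ne]
  rw [hcong, hcong, one_div, one_div] at key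
  exact key

/-- Total variation norm `‖μ - ν‖` of the difference of two (finite) measures,
via the Jordan decomposition (`Measure.sub` is the positive part). -/
def tvDist {Z : Type*} [MeasurableSpace Z] (μ ν : Measure Z) : ℝ≥0∞ :=
  (μ - ν) Set.univ + (ν - μ) Set.univ
theorem renyi_monotone_and_tendsto_kl_from_above
    {Y : Type*} [MeasurableSpace Y]
    (μ ν : Measure Y) [IsProbabilityMeasure μ] [IsProbabilityMeasure ν] (hac : μ ≪ ν)
    (α₀ : ℝ) (hα₀ : 1 < α₀) (hfin : RenyiDiv α₀ μ ν < ∞) :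
    KLdiv μ ν < ∞ ∧
    (∀ a b : ℝ, 1 < a → a ≤ b → b ≤ α₀ → RenyiDiv a μ ν ≤ RenyiDiv b μ ν) ∧
    Filter.Tendsto (fun α : ℝ => RenyiDiv α μ ν)
      (nhdsWithin 1 (Set.Ioi 1)) (nhds (KLdiv μ ν)) := by
  classical
  set f := μ.rnDeriv ν with hfdef
  have hfm : Measurable f := Measure.measurable_rnDeriv μ ν
  have hfltν : ∀ᵐ y ∂ν, f y < ∞ := μ.rnDeriv_lt_top ν
  have hfltμ : ∀ᵐ y ∂μ, f y < ∞ := hac.ae_le hfltν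
  have hfpos : ∀ᵐ y ∂μ, 0 < f y := Measure.rnDeriv_pos hac
  have hμf : ν.withDensity f = μ := Measure.withDensity_rnDeriv_eq μ ν hac
  have hcov : ∀ g : Y → ℝ≥0∞, Measurable g → ∫⁻ y, g y ∂μ = ∫⁻ y, f y * g y ∂ν := by
    intro g hg
    rw [← hμf, lintegral_withDensity_eq_lintegral_mul ν hfm hg]
    rfl
  have hcm : ∀ s : ℝ, 0 < s → ∫⁻ y, f y ^ (s + 1) ∂ν = ∫⁻ y, f y ^ s ∂μ := by
    intro s hs
    rw [hcov _ (hfm.pow_const s)]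
    refine lintegral_congr_ae ?_
    filter_upwards [hfltν] with y hy
    rcases eq_or_ne (f y) 0 with h0 | h0
    · rw [h0, ENNReal.zero_rpow_of_pos (by linarith), ENNReal.zero_rpow_of_pos hs, mul_zero]
    · rw [ENNReal.rpow_add s 1 h0 hy.ne, ENNReal.rpow_one, mul_comm]
  set g : ℝ → ℝ≥0∞ := fun s => ∫⁻ y, f y ^ s ∂μ with hgdef
  have hp₀ : (0 : ℝ) < α₀ - 1 := by linarith
  have hνα : ∀ α : ℝ, 1 < α → ∫⁻ y, f y ^ α ∂ν = g (α - 1) := by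
    intro α hα
    have := hcm (α - 1) (by linarith)
    rwa [sub_add_cancel] at this
  have hItop : ∫⁻ y, f y ^ α₀ ∂ν ≠ ∞ := by
    intro htop
    have hrd : RenyiDiv α₀ μ ν = ∞ := by
      rw [RenyiDiv, if_pos (Or.inl ⟨hα₀, htop⟩)]
    rw [hrd] at hfin
    exact lt_irrefl _ hfin
  have hgp₀ : g (α₀ - 1) ≠ ∞ := (hνα α₀ hα₀) ▸ hItop
  have hgfin : ∀ s : ℝ, 0 ≤ s → s ≤ α₀ - 1 → g s ≠ ∞ := by
    intro s h0 h1
    have hb : g s ≤ 1 + g (α₀ - 1) := by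
      have hle : g s ≤ ∫⁻ y, (1 + f y ^ (α₀ - 1)) ∂μ := by
        refine lintegral_mono fun y => ?_
        rcases le_total (f y) 1 with h | h
        · exact (ENNReal.rpow_le_one h h0).trans le_self_add
        · exact (ENNReal.rpow_le_rpow_of_exponent_le h h1).trans le_add_self
      rwa [lintegral_add_left measurable_const, lintegral_one, measure_univ] at hle
    exact ne_top_of_le_ne_top (ENNReal.add_ne_top.mpr ⟨ENNReal.one_ne_top, hgp₀⟩) hb
  have hg1 : ∀ s : ℝ, 0 < s → 1 ≤ g s := by
    intro s hs
    have key := aux_lyapunov ν hfm hfltν (s := 1) (t := s + 1) one_pos (by linarith)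
    simp only [ENNReal.rpow_one, inv_one] at key
    rw [hfdef, Measure.lintegral_rnDeriv hac, measure_univ] at key
    rw [← hfdef, hcm s hs] at key
    by_contra hlt
    push_neg at hlt
    have hpow : (g s) ^ (s + 1)⁻¹ < 1 ^ (s + 1)⁻¹ :=
      ENNReal.rpow_lt_rpow hlt (by positivity)
    rw [ENNReal.one_rpow] at hpow
    exact absurd key (not_le.mpr hpow)
  have hGto : ∀ s : ℝ, 0 < s → s ≤ α₀ - 1 →
      Integrable (fun y => (f y).toReal ^ s) μ ∧
        ∫ y, (f y).toReal ^ s ∂μ = (g s).toReal := by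
    intro s hs hsp
    have hmeas : AEMeasurable (fun y => f y ^ s) μ := (hfm.pow_const s).aemeasurable
    have hae : ∀ᵐ y ∂μ, f y ^ s < ∞ :=
      hfltμ.mono fun y hy => ENNReal.rpow_lt_top_of_nonneg hs.le hy.ne
    have heq : (fun y => (f y).toReal ^ s) = fun y => (f y ^ s).toReal :=
      funext fun y => ENNReal.toReal_rpow _ _
    constructor
    · rw [heq]; exact integrable_toReal_of_lintegral_ne_top hmeas (hgfin s hs.le hsp)
    · rw [heq]; exact integral_toReal hmeas hae
  have hG1 : ∀ s : ℝ, 0 < s → s ≤ α₀ - 1 → 1 ≤ (g s).toReal := by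
    intro s hs hsp
    have := ENNReal.toReal_mono (hgfin s hs.le hsp) (hg1 s hs)
    simpa using this
  -- integrability of the log-density
  have hinv : Integrable (fun y => ((f y).toReal)⁻¹) μ := by
    have hne : ∫⁻ y, (f y)⁻¹ ∂μ ≠ ∞ := by
      rw [hcov (fun y => (f y)⁻¹) hfm.inv]
      refine ne_top_of_le_ne_top ENNReal.one_ne_top ?_
      calc ∫⁻ y, f y * (f y)⁻¹ ∂ν ≤ ∫⁻ _, 1 ∂ν :=
            lintegral_mono fun y => ENNReal.mul_inv_le_one _
        _ = 1 := by simp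
    have h2 := integrable_toReal_of_lintegral_ne_top hfm.inv.aemeasurable hne
    simpa [ENNReal.toReal_inv] using h2
  have hppow : Integrable (fun y => (f y).toReal ^ (α₀ - 1)) μ := (hGto _ hp₀ le_rfl).1
  have hlogmeas : AEStronglyMeasurable (fun y => Real.log (f y).toReal) μ :=
    (Real.measurable_log.comp hfm.ennreal_toReal).aestronglyMeasurable
  have hlogint : Integrable (fun y => Real.log (f y).toReal) μ := by
    refine Integrable.mono ((hppow.div_const (α₀ - 1)).add hinv) hlogmeas ?_
    filter_upwards [hfpos, hfltμ] with y hy0 hy1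
    have ht : 0 < (f y).toReal := ENNReal.toReal_pos hy0.ne' hy1.ne
    set t := (f y).toReal with htdef
    have habs : |Real.log t| ≤ t ^ (α₀ - 1) / (α₀ - 1) + t⁻¹ := by
      rcases le_total 1 t with h | h
      · rw [abs_of_nonneg (Real.log_nonneg h)]
        have h1 := aux_log_le ht hp₀
        have h2 : (t ^ (α₀ - 1) - 1) / (α₀ - 1) ≤ t ^ (α₀ - 1) / (α₀ - 1) := by
          gcongr
          linarith
        have h3 : (0 : ℝ) ≤ t⁻¹ := inv_nonneg.mpr ht.le
        linarith
      · rw [abs_of_nonpos (Real.log_nonpos ht.le h)]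
        have h1 : Real.log t⁻¹ ≤ t⁻¹ - 1 := Real.log_le_sub_one_of_pos (inv_pos.mpr ht)
        rw [Real.log_inv] at h1
        have h2 : (0 : ℝ) ≤ t ^ (α₀ - 1) / (α₀ - 1) := by positivity
        linarith
    calc ‖Real.log t‖ = |Real.log t| := rfl
      _ ≤ t ^ (α₀ - 1) / (α₀ - 1) + t⁻¹ := habs
      _ ≤ ‖t ^ (α₀ - 1) / (α₀ - 1) + t⁻¹‖ := le_abs_self _
  set K := ∫ y, Real.log (f y).toReal ∂μ with hKdef
  have hKL : KLdiv μ ν = ENNReal.ofReal K := by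
    rw [KLdiv, if_pos hlogint]
  -- the three sub-statements
  have hRD : ∀ α : ℝ, 1 < α → α ≤ α₀ →
      RenyiDiv α μ ν = ENNReal.ofReal ((α - 1)⁻¹ * Real.log (g (α - 1)).toReal) := by
    intro α h1 h2
    have hne : ∫⁻ y, f y ^ α ∂ν ≠ ∞ := by
      rw [hνα α h1]; exact hgfin (α - 1) (by linarith) (by linarith)
    rw [RenyiDiv, if_neg, hνα α h1]
    rintro (⟨-, h⟩ | ⟨h, -⟩)
    · exact hne h
    · linarith
  refine ⟨hKL ▸ ENNReal.ofReal_lt_top, ?_, ?_⟩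
  · -- monotonicity
    intro a b ha hab hb
    have ha' : (0 : ℝ) < a - 1 := by linarith
    have hb' : (0 : ℝ) < b - 1 := by linarith
    have hga : g (a - 1) ≠ ∞ := hgfin _ ha'.le (by linarith)
    have hgb : g (b - 1) ≠ ∞ := hgfin _ hb'.le (by linarith)
    have hA1 : 1 ≤ (g (a - 1)).toReal := hG1 _ ha' (by linarith)
    have hB1 : 1 ≤ (g (b - 1)).toReal := hG1 _ hb' (by linarith)
    rw [hRD a ha (hab.trans hb), hRD b (ha.trans_le hab) hb]
    apply ENNReal.ofReal_le_ofReal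
    have hlyap := aux_lyapunov μ hfm hfltμ ha' (by linarith : a - 1 ≤ b - 1)
    have hRfin : (g (b - 1)) ^ (b - 1)⁻¹ ≠ ∞ :=
      (ENNReal.rpow_lt_top_of_nonneg (by positivity) hgb).ne
    have htr := ENNReal.toReal_mono hRfin hlyap
    rw [← ENNReal.toReal_rpow, ← ENNReal.toReal_rpow] at htr
    have hApos : (0 : ℝ) < (g (a - 1)).toReal := by linarith
    have hBpos : (0 : ℝ) < (g (b - 1)).toReal := by linarith
    have hlog := (Real.log_le_log_iff (Real.rpow_pos_of_pos hApos _)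
      (Real.rpow_pos_of_pos hBpos _)).mpr htr
    rwa [Real.log_rpow hApos, Real.log_rpow hBpos] at hlog
  · -- the limit
    have hIoc : Set.Ioc (1 : ℝ) α₀ ∈ 𝓝[>] (1 : ℝ) :=
      Ioc_mem_nhdsGT_of_mem ⟨le_refl 1, hα₀⟩
    have hmap : Tendsto (fun α : ℝ => α - 1) (𝓝[>] (1 : ℝ)) (𝓝[≠] (0 : ℝ)) := by
      rw [tendsto_nhdsWithin_iff]
      constructor
      · have hb : Tendsto (fun α : ℝ => α - 1) (𝓝 (1 : ℝ)) (𝓝 (0 : ℝ)) := by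
          have := (continuous_sub_right (1:ℝ)).tendsto (1 : ℝ)
          simpa using this
        exact hb.mono_left nhdsWithin_le_nhds
      · exact eventually_mem_nhdsWithin.mono fun x hx =>
          Set.mem_compl_singleton_iff.mpr (sub_ne_zero.mpr (ne_of_gt hx))
    have hslope : ∀ t : ℝ, 0 < t →
        Tendsto (fun α : ℝ => (t ^ (α - 1) - 1) / (α - 1)) (𝓝[>] (1 : ℝ))
          (𝓝 (Real.log t)) := by
      intro t ht
      have hd : HasDerivAt (fun s : ℝ => t ^ s) (Real.log t) 0 := by
        have := (Real.hasStrictDerivAt_const_rpow ht 0).hasDerivAt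
        simpa using this
      have hsl := hasDerivAt_iff_tendsto_slope.mp hd
      have hcomp := hsl.comp hmap
      refine hcomp.congr fun α => ?_
      simp [Function.comp, slope_def_field, Real.rpow_zero]
    have hDC : Tendsto (fun α : ℝ => ∫ y, ((f y).toReal ^ (α - 1) - 1) / (α - 1) ∂μ)
        (𝓝[>] (1 : ℝ)) (𝓝 K) := by
      refine tendsto_integral_filter_of_dominated_convergence
        (bound := fun y => |Real.log (f y).toReal| + ((f y).toReal ^ (α₀ - 1) + 1) / (α₀ - 1))
        ?_ ?_ ?_ ?_
      · exact Filter.Eventually.of_forall fun α =>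
          (((hfm.ennreal_toReal.pow_const (α - 1)).sub measurable_const).div_const
            _).aestronglyMeasurable
      · filter_upwards [hIoc] with α hα
        filter_upwards [hfpos, hfltμ] with y hy0 hy1
        have ht : 0 < (f y).toReal := ENNReal.toReal_pos hy0.ne' hy1.ne
        set t := (f y).toReal with htdef
        have hs : 0 < α - 1 := sub_pos.mpr hα.1
        have hsp : α - 1 ≤ α₀ - 1 := by linarith [hα.2]
        rw [Real.norm_eq_abs, abs_le]
        constructor
        · have h1 : Real.log t ≤ (t ^ (α - 1) - 1) / (α - 1) := aux_log_le ht hs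
          have h2 := neg_abs_le (Real.log t)
          have h3 : (0 : ℝ) ≤ (t ^ (α₀ - 1) + 1) / (α₀ - 1) := by positivity
          linarith
        · have h2 : (t ^ (α - 1) - 1) / (α - 1) ≤ (t ^ (α₀ - 1) - 1) / (α₀ - 1) :=
            aux_bernoulli_slope ht hs hsp
          have h3 : (t ^ (α₀ - 1) - 1) / (α₀ - 1) ≤ (t ^ (α₀ - 1) + 1) / (α₀ - 1) := by
            gcongr
            linarith
          have h4 : (0 : ℝ) ≤ |Real.log t| := abs_nonneg _
          linarith
      · exact hlogint.abs.add ((hppow.add (integrable_const 1)).div_const _)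
      · filter_upwards [hfpos, hfltμ] with y hy0 hy1
        exact hslope _ (ENNReal.toReal_pos hy0.ne' hy1.ne)
    have hInt : ∀ᶠ α in 𝓝[>] (1 : ℝ),
        ∫ y, ((f y).toReal ^ (α - 1) - 1) / (α - 1) ∂μ
          = ((g (α - 1)).toReal - 1) / (α - 1) := by
      filter_upwards [hIoc] with α hα
      have hs : 0 < α - 1 := sub_pos.mpr hα.1
      obtain ⟨hint, heq⟩ := hGto (α - 1) hs (by linarith [hα.2])
      rw [integral_div, integral_sub hint (integrable_const 1), heq]
      simp
    have hL : Tendsto (fun α : ℝ => ((g (α - 1)).toReal - 1) / (α - 1)) (𝓝[>] (1 : ℝ))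
        (𝓝 K) := hDC.congr' hInt
    have hsub : Tendsto (fun α : ℝ => α - 1) (𝓝[>] (1 : ℝ)) (𝓝 (0 : ℝ)) :=
      hmap.mono_right nhdsWithin_le_nhds
    have hGt : Tendsto (fun α : ℝ => (g (α - 1)).toReal) (𝓝[>] (1 : ℝ)) (𝓝 1) := by
      have h0 := hL.mul hsub
      rw [mul_zero] at h0
      have h1 : (fun α : ℝ => ((g (α - 1)).toReal - 1) / (α - 1) * (α - 1))
          =ᶠ[𝓝[>] (1 : ℝ)] fun α => (g (α - 1)).toReal - 1 := by
        filter_upwards [eventually_mem_nhdsWithin] with α hα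
        exact div_mul_cancel₀ _ (sub_ne_zero.mpr (ne_of_gt hα))
      have h2 := h0.congr' h1
      have h3 := h2.add (tendsto_const_nhds (x := (1 : ℝ)))
      simpa using h3
    have hlow : Tendsto (fun α : ℝ =>
        ((g (α - 1)).toReal)⁻¹ * (((g (α - 1)).toReal - 1) / (α - 1))) (𝓝[>] (1 : ℝ))
        (𝓝 K) := by
      have := (hGt.inv₀ one_ne_zero).mul hL
      simpa using this
    have hRt : Tendsto (fun α : ℝ => (α - 1)⁻¹ * Real.log (g (α - 1)).toReal)
        (𝓝[>] (1 : ℝ)) (𝓝 K) := by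
      refine tendsto_of_tendsto_of_tendsto_of_le_of_le' hlow hL ?_ ?_
      · filter_upwards [hIoc] with α hα
        have hs : 0 < α - 1 := sub_pos.mpr hα.1
        have hGa : 1 ≤ (g (α - 1)).toReal := hG1 _ hs (by linarith [hα.2])
        have hGpos : (0 : ℝ) < (g (α - 1)).toReal := by linarith
        have hlog : 1 - ((g (α - 1)).toReal)⁻¹ ≤ Real.log ((g (α - 1)).toReal) := by
          have h := Real.log_le_sub_one_of_pos (inv_pos.mpr hGpos)
          rw [Real.log_inv] at h
          linarith
        have heq2 : ((g (α - 1)).toReal)⁻¹ * (((g (α - 1)).toReal - 1) / (α - 1))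
            = (1 - ((g (α - 1)).toReal)⁻¹) * (α - 1)⁻¹ := by
          field_simp
        rw [heq2, mul_comm ((α - 1)⁻¹) (Real.log (g (α - 1)).toReal)]
        exact mul_le_mul_of_nonneg_right hlog (inv_nonneg.mpr hs.le)
      · filter_upwards [hIoc] with α hα
        have hs : 0 < α - 1 := sub_pos.mpr hα.1
        have hGa : 1 ≤ (g (α - 1)).toReal := hG1 _ hs (by linarith [hα.2])
        have hGpos : (0 : ℝ) < (g (α - 1)).toReal := by linarith
        have hlog := Real.log_le_sub_one_of_pos hGpos
        rw [div_eq_inv_mul]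
        exact mul_le_mul_of_nonneg_left hlog (inv_nonneg.mpr hs.le)
    have hofReal : Tendsto (fun α : ℝ =>
        ENNReal.ofReal ((α - 1)⁻¹ * Real.log (g (α - 1)).toReal)) (𝓝[>] (1 : ℝ))
        (𝓝 (ENNReal.ofReal K)) := (ENNReal.continuous_ofReal.tendsto K).comp hRt
    have hEq : (fun α : ℝ => ENNReal.ofReal ((α - 1)⁻¹ * Real.log (g (α - 1)).toReal))
        =ᶠ[𝓝[>] (1 : ℝ)] fun α => RenyiDiv α μ ν := by
      filter_upwards [hIoc] with α hα
      exact (hRD α hα.1 hα.2).symm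
    rw [hKL]
    exact hofReal.congr' hEq
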